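/- Let Γ be a distance-biregular graph and ℓ ∈ {0,1}. If i, j ≥ 1, i + j is even, and i + j ≤ D_ℓ, then c_{ℓ,i} ≤ b_{ℓ,j}. -/

import Mathlib

open Finset SimpleGraph
open Fin.NatCast Fin.CommRing

private lemma walk_split {V : Type} {G : SimpleGraph V} {x y : V}
    (p : G.Walk x y) (m : ℕ) (hm : m ≤ p.length) :
    ∃ z : V, ∃ q1 : G.Walk x z, ∃ q2 : G.Walk z y,
      q1.length = m ∧ q2.length = p.length - m := by
  induction p generalizing m with
  | nil => exact ⟨_, .nil, .nil, by simp at hm ⊢; omega, by simp⟩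
  | cons h q ih =>
    cases m with
    | zero => exact ⟨_, .nil, .cons h q, rfl, by simp⟩
    | succ m =>
      obtain ⟨z, q1, q2, h1, h2⟩ := ih m (by simpa using hm)
      exact ⟨z, .cons h q1, q2, by simp [h1], by simp [h2]⟩

private lemma dist_split {V : Type} {G : SimpleGraph V} (hconn : G.Connected)
    {x y : V} {n : ℕ} (hd : G.dist x y = n) {m : ℕ} (hm : m ≤ n) :
    ∃ z : V, G.dist x z = m ∧ G.dist z y = n - m := by
  obtain ⟨p, hp⟩ := hconn.exists_walk_length_eq_dist x y
  obtain ⟨z, q1, q2, h1, h2⟩ := walk_split p m (by omega)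
  have d1 : G.dist x z ≤ m := h1 ▸ SimpleGraph.dist_le q1
  have d2 : G.dist z y ≤ n - m := by
    have := SimpleGraph.dist_le q2; omega
  have := hconn.dist_triangle (u := x) (v := z) (w := y)
  exact ⟨z, by omega, by omega⟩

private lemma sigma_walk {V : Type} {G : SimpleGraph V} {σ : V → Fin 2}
    (hbip : ∀ x y : V, G.Adj x y → σ x ≠ σ y) {x y : V} (p : G.Walk x y) :
    σ y = σ x + (p.length : Fin 2) := by
  induction p with
  | nil => simp
  | @cons a b c h q ih =>
    have hb : σ b = σ a + 1 := by
      have := hbip a b h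
      revert this; generalize σ a = s; generalize σ b = t; revert s t; decide
    rw [ih, hb]
    push_cast [SimpleGraph.Walk.length_cons]
    ring

private lemma sigma_eq_of_even_dist {V : Type} {G : SimpleGraph V}
    (hconn : G.Connected) {σ : V → Fin 2}
    (hbip : ∀ x y : V, G.Adj x y → σ x ≠ σ y) {x y : V}
    (h : Even (G.dist x y)) : σ y = σ x := by
  obtain ⟨p, hp⟩ := hconn.exists_walk_length_eq_dist x y
  have := sigma_walk hbip p
  obtain ⟨r, hr⟩ := h
  rw [this, hp, hr]
  have h0 : ((r + r : ℕ) : Fin 2) = 0 := by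
    push_cast
    rw [show ((r : Fin 2) + r) = 2 * (r : Fin 2) by ring,
      show (2 : Fin 2) = 0 by decide]
    ring
  rw [h0, add_zero]

theorem stmt5 {V : Type} [Fintype V] [DecidableEq V]
    (G : SimpleGraph V) [DecidableRel G.Adj]
    (hconn : G.Connected) (hcard : 2 ≤ Fintype.card V)
    (σ : V → Fin 2)
    (hbip : ∀ x y : V, G.Adj x y → σ x ≠ σ y)
    (k : Fin 2 → ℕ)
    (hdeg : ∀ x : V, G.degree x = k (σ x))
    (c b : Fin 2 → ℕ → ℕ)
    (hc : ∀ (x y : V) (i : ℕ), G.dist x y = i →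
      (Finset.univ.filter (fun z => G.dist x z = i - 1 ∧ G.Adj y z)).card = c (σ x) i)
    (hb : ∀ (x y : V) (i : ℕ), G.dist x y = i →
      (Finset.univ.filter (fun z => G.dist x z = i + 1 ∧ G.Adj y z)).card = b (σ x) i)
    (D : Fin 2 → ℕ)
    (hDub : ∀ x y : V, G.dist x y ≤ D (σ x))
    (hDmax : ∀ ℓ : Fin 2, ∃ x y : V, σ x = ℓ ∧ G.dist x y = D ℓ)
    (hD0 : 1 ≤ D 0) (hD01 : D 0 ≤ D 1) :
    ∀ (ℓ : Fin 2) (i j : ℕ), 1 ≤ i → 1 ≤ j → Even (i + j) → i + j ≤ D ℓ →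
      c ℓ i ≤ b ℓ j := by
  intro ℓ i j hi hj hev hle
  obtain ⟨x, y₀, hσx, hd⟩ := hDmax ℓ
  obtain ⟨y, hxy, -⟩ := dist_split hconn hd (m := i + j) hle
  obtain ⟨z, hxz, hzy⟩ := dist_split hconn hxy (m := i) (by omega)
  have hzy' : G.dist z y = j := by rw [hzy]; omega
  have hσy : σ y = ℓ := by
    rw [sigma_eq_of_even_dist hconn hbip (hxy ▸ hev), hσx]
  have hA := hc x z i hxz
  have hB := hb y z j (by rw [SimpleGraph.dist_comm (u := y) (v := z)]; exact hzy')
  rw [hσx] at hA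
  rw [hσy] at hB
  rw [← hA, ← hB]
  apply Finset.card_le_card
  intro u hu
  simp only [Finset.mem_filter, Finset.mem_univ, true_and] at hu ⊢
  obtain ⟨hxu, hzu⟩ := hu
  refine ⟨?_, hzu⟩
  have hzu1 : G.dist z u = 1 := SimpleGraph.dist_eq_one_iff_adj.mpr hzu
  have h1 : G.dist y u ≤ j + 1 := by
    have := hconn.dist_triangle (u := y) (v := z) (w := u)
    rw [SimpleGraph.dist_comm (u := y) (v := z), hzy', hzu1] at this
    exact this
  have h2 : G.dist x y ≤ G.dist x u + G.dist u y :=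
    hconn.dist_triangle
  rw [hxy, hxu, SimpleGraph.dist_comm (u := u) (v := y)] at h2
  omega
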